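/- Suppose the aggregation map φ satisfies: φ(s1) = φ(s2) implies |Q*(s1, a) − Q*(s2, a)| ≤ ε for all a ∈ A1×A2, for some ε ≥ 0. Then the ground policy profile π_GA* induced by a Nash equilibrium π_A* of the abstract game satisfies GAP(π_GA*) ≤ 12·ε/(1−γ)³. -/

import Mathlib

open Finset

/-- A mixed Markov policy: a probability distribution over actions at each state. -/
def IsPolicy {S A : Type*} [Fintype A] (π : S → A → ℝ) : Prop :=
  (∀ s a, 0 ≤ π s a) ∧ ∀ s, ∑ a, π s a = 1

/-- A transition kernel: a probability distribution over next states for every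
state and joint action. -/
def IsKernel {S A1 A2 : Type*} [Fintype S] (P : S → A1 → A2 → S → ℝ) : Prop :=
  (∀ s a1 a2 s', 0 ≤ P s a1 a2 s') ∧ ∀ s a1 a2, ∑ s', P s a1 a2 s' = 1

/-- Rewards lie in `[0,1]`. -/
def IsReward {S A1 A2 : Type*} (R : S → A1 → A2 → ℝ) : Prop :=
  ∀ s a1 a2, 0 ≤ R s a1 a2 ∧ R s a1 a2 ≤ 1

/-- The state-action value induced by a state value function `V`:
`Q(s,a) = R(s,a) + γ * Σ_{s'} P(s'|s,a) V(s')`. -/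
def Qf {S A1 A2 : Type*} [Fintype S] (R : S → A1 → A2 → ℝ) (P : S → A1 → A2 → S → ℝ)
    (γ : ℝ) (V : S → ℝ) (s : S) (a1 : A1) (a2 : A2) : ℝ :=
  R s a1 a2 + γ * ∑ s', P s a1 a2 s' * V s'

/-- `V` satisfies the Bellman equation for the policy profile `(π1, π2)`. -/
def IsValue {S A1 A2 : Type*} [Fintype S] [Fintype A1] [Fintype A2]
    (R : S → A1 → A2 → ℝ) (P : S → A1 → A2 → S → ℝ) (γ : ℝ)
    (π1 : S → A1 → ℝ) (π2 : S → A2 → ℝ) (V : S → ℝ) : Prop :=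
  ∀ s, V s = ∑ a1, ∑ a2, π1 s a1 * π2 s a2 * Qf R P γ V s a1 a2

/-- `Val` assigns to every policy profile its value function. -/
def IsValueOperator {S A1 A2 : Type*} [Fintype S] [Fintype A1] [Fintype A2]
    (R : S → A1 → A2 → ℝ) (P : S → A1 → A2 → S → ℝ) (γ : ℝ)
    (Val : (S → A1 → ℝ) → (S → A2 → ℝ) → S → ℝ) : Prop :=
  ∀ π1 π2, IsPolicy π1 → IsPolicy π2 → IsValue R P γ π1 π2 (Val π1 π2)

/-- `(π1, π2)` is a Nash equilibrium of the game whose values are given by `Val`: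
for all states `s` and all policies `π1'`, `π2'`,
`Val π1 π2' s ≥ Val π1 π2 s ≥ Val π1' π2 s`. -/
def IsNash {S A1 A2 : Type*} [Fintype A1] [Fintype A2]
    (Val : (S → A1 → ℝ) → (S → A2 → ℝ) → S → ℝ)
    (π1 : S → A1 → ℝ) (π2 : S → A2 → ℝ) : Prop :=
  IsPolicy π1 ∧ IsPolicy π2 ∧
    ∀ s, ∀ π1' π2', IsPolicy π1' → IsPolicy π2' →
      Val π1 π2' s ≥ Val π1 π2 s ∧ Val π1 π2 s ≥ Val π1' π2 s

/-- `π1d` is a best response for player 1 against the player-2 policy `π2`: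
`Val π1d π2 s = max_{π1} Val π1 π2 s` for every state `s`. -/
def IsBestResponse1 {S A1 A2 : Type*} [Fintype A1]
    (Val : (S → A1 → ℝ) → (S → A2 → ℝ) → S → ℝ)
    (π1d : S → A1 → ℝ) (π2 : S → A2 → ℝ) : Prop :=
  IsPolicy π1d ∧ ∀ π1, IsPolicy π1 → ∀ s, Val π1 π2 s ≤ Val π1d π2 s

/-- A weight function for the aggregation map `φ`: weights lie in `[0,1]` and sum
to one within each aggregated class. -/
def IsAggWeight {S SA : Type*} [Fintype S] [DecidableEq SA] (φ : S → SA) (w : S → ℝ) : Prop :=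
  (∀ s, 0 ≤ w s ∧ w s ≤ 1) ∧ ∀ sA : SA, ∑ s ∈ univ.filter (fun s => φ s = sA), w s = 1

/-- The abstract transition kernel:
`P_A(s_A'|s_A,a) = Σ_{s : φ s = s_A} Σ_{s' : φ s' = s_A'} P(s'|s,a) w(s)`. -/
def PA {S SA A1 A2 : Type*} [Fintype S] [DecidableEq SA]
    (P : S → A1 → A2 → S → ℝ) (φ : S → SA) (w : S → ℝ)
    (sA : SA) (a1 : A1) (a2 : A2) (sA' : SA) : ℝ :=
  ∑ s ∈ univ.filter (fun s => φ s = sA),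
    ∑ s' ∈ univ.filter (fun s' => φ s' = sA'), P s a1 a2 s' * w s

/-- The abstract reward function:
`R_A(s_A,a) = Σ_{s : φ s = s_A} R(s,a) w(s)`. -/
def RA {S SA A1 A2 : Type*} [Fintype S] [DecidableEq SA]
    (R : S → A1 → A2 → ℝ) (φ : S → SA) (w : S → ℝ)
    (sA : SA) (a1 : A1) (a2 : A2) : ℝ :=
  ∑ s ∈ univ.filter (fun s => φ s = sA), R s a1 a2 * w s

section AuxHelpers

open Finset

variable {S SA A1 A2 : Type*}

lemma wsum_le' [Fintype S] (t : Finset S) (p f : S → ℝ) (c : ℝ)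
    (hp0 : ∀ s ∈ t, 0 ≤ p s) (hp1 : ∑ s ∈ t, p s = 1)
    (h : ∀ s ∈ t, f s ≤ c) : ∑ s ∈ t, p s * f s ≤ c := by
  calc ∑ s ∈ t, p s * f s ≤ ∑ s ∈ t, p s * c :=
        Finset.sum_le_sum fun s hs => mul_le_mul_of_nonneg_left (h s hs) (hp0 s hs)
    _ = c := by rw [← Finset.sum_mul, hp1, one_mul]

lemma wsum_sub_le' [Fintype S] (t : Finset S) (p f g : S → ℝ) (c : ℝ)
    (hp0 : ∀ s ∈ t, 0 ≤ p s) (hp1 : ∑ s ∈ t, p s = 1)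
    (h : ∀ s ∈ t, f s ≤ g s + c) :
    ∑ s ∈ t, p s * f s ≤ (∑ s ∈ t, p s * g s) + c := by
  have h2 := wsum_le' t p (fun s => f s - g s) c hp0 hp1 (fun s hs => by linarith [h s hs])
  simp only [mul_sub] at h2
  rw [Finset.sum_sub_distrib] at h2
  linarith

lemma wsum_abs_le' [Fintype S] (t : Finset S) (p f : S → ℝ) (c : ℝ)
    (hp0 : ∀ s ∈ t, 0 ≤ p s) (hp1 : ∑ s ∈ t, p s = 1)
    (h : ∀ s ∈ t, |f s| ≤ c) : |∑ s ∈ t, p s * f s| ≤ c := by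
  rw [abs_le]
  constructor
  · have h2 := wsum_le' t p (fun s => -f s) c hp0 hp1
      (fun s hs => by have := h s hs; rw [abs_le] at this; linarith)
    simp only [mul_neg, Finset.sum_neg_distrib] at h2
    linarith
  · exact wsum_le' t p f c hp0 hp1 (fun s hs => by have := h s hs; rw [abs_le] at this; exact this.2)

lemma wsum2_sub_le' [Fintype A1] [Fintype A2] (p : A1 → ℝ) (q : A2 → ℝ)
    (hp0 : ∀ a, 0 ≤ p a) (hp1 : ∑ a, p a = 1)
    (hq0 : ∀ a, 0 ≤ q a) (hq1 : ∑ a, q a = 1)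
    (f g : A1 → A2 → ℝ) (c : ℝ) (h : ∀ a1 a2, f a1 a2 ≤ g a1 a2 + c) :
    ∑ a1, ∑ a2, p a1 * q a2 * f a1 a2 ≤ (∑ a1, ∑ a2, p a1 * q a2 * g a1 a2) + c := by
  have key : ∀ a1, ∑ a2, q a2 * f a1 a2 ≤ (∑ a2, q a2 * g a1 a2) + c := fun a1 =>
    wsum_sub_le' univ q (f a1) (g a1) c (fun a _ => hq0 a) hq1 (fun a _ => h a1 a)
  have e1 : ∀ (F : A1 → A2 → ℝ), (∑ a1, ∑ a2, p a1 * q a2 * F a1 a2)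
      = ∑ a1, p a1 * ∑ a2, q a2 * F a1 a2 := by
    intro F
    refine Finset.sum_congr rfl fun a1 _ => ?_
    rw [Finset.mul_sum]
    exact Finset.sum_congr rfl fun a2 _ => by ring
  rw [e1 f, e1 g]
  exact wsum_sub_le' univ p (fun a1 => ∑ a2, q a2 * f a1 a2)
    (fun a1 => ∑ a2, q a2 * g a1 a2) c (fun a _ => hp0 a) hp1 (fun a1 _ => key a1)

lemma Qf_sub_le' [Fintype S] (R : S → A1 → A2 → ℝ) (P : S → A1 → A2 → S → ℝ) {γ : ℝ}
    (hP : IsKernel P) (hγ0 : 0 ≤ γ) (V W : S → ℝ) (c : ℝ)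
    (h : ∀ s, W s ≤ V s + c) (s : S) (a1 : A1) (a2 : A2) :
    Qf R P γ W s a1 a2 ≤ Qf R P γ V s a1 a2 + γ * c := by
  unfold Qf
  have h1 : ∑ s', P s a1 a2 s' * W s' ≤ (∑ s', P s a1 a2 s' * V s') + c :=
    wsum_sub_le' univ (P s a1 a2) W V c (fun s' _ => hP.1 s a1 a2 s') (hP.2 s a1 a2)
      (fun s' _ => h s')
  nlinarith [mul_le_mul_of_nonneg_left h1 hγ0]

lemma fixedpoint_le' [Fintype S] [Nonempty S] [Fintype A1] [Fintype A2]
    (R : S → A1 → A2 → ℝ) (P : S → A1 → A2 → S → ℝ) {γ : ℝ}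
    (hP : IsKernel P) (hγ0 : 0 ≤ γ) (hγ1 : γ < 1)
    (π1 : S → A1 → ℝ) (π2 : S → A2 → ℝ) (hπ1 : IsPolicy π1) (hπ2 : IsPolicy π2)
    (W V : S → ℝ) (hW : IsValue R P γ π1 π2 W) (δ : ℝ)
    (hres : ∀ s, (∑ a1, ∑ a2, π1 s a1 * π2 s a2 * Qf R P γ V s a1 a2) ≤ V s + δ) :
    ∀ s, W s ≤ V s + δ / (1 - γ) := by
  have hγ' : (0:ℝ) < 1 - γ := by linarith
  obtain ⟨s0, _, hs0⟩ := Finset.exists_max_image univ (fun s => W s - V s) univ_nonempty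
  set M := W s0 - V s0 with hMdef
  have hMle : ∀ s, W s ≤ V s + M := fun s => by have := hs0 s (mem_univ s); simp at this; linarith
  have key : M ≤ δ + γ * M := by
    have h1 := hW s0
    have h2 : (∑ a1, ∑ a2, π1 s0 a1 * π2 s0 a2 * Qf R P γ W s0 a1 a2)
        ≤ (∑ a1, ∑ a2, π1 s0 a1 * π2 s0 a2 * Qf R P γ V s0 a1 a2) + γ * M :=
      wsum2_sub_le' (π1 s0) (π2 s0) (hπ1.1 s0) (hπ1.2 s0) (hπ2.1 s0) (hπ2.2 s0) _ _ _
        (fun a1 a2 => Qf_sub_le' R P hP hγ0 V W M hMle s0 a1 a2)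
    have h3 := hres s0
    have : W s0 ≤ V s0 + δ + γ * M := by rw [h1]; linarith
    linarith
  have hMfin : M ≤ δ / (1 - γ) := by
    rw [le_div_iff₀ hγ']
    nlinarith
  intro s
  have := hMle s
  linarith

lemma fixedpoint_ge' [Fintype S] [Nonempty S] [Fintype A1] [Fintype A2]
    (R : S → A1 → A2 → ℝ) (P : S → A1 → A2 → S → ℝ) {γ : ℝ}
    (hP : IsKernel P) (hγ0 : 0 ≤ γ) (hγ1 : γ < 1)
    (π1 : S → A1 → ℝ) (π2 : S → A2 → ℝ) (hπ1 : IsPolicy π1) (hπ2 : IsPolicy π2)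
    (W V : S → ℝ) (hW : IsValue R P γ π1 π2 W) (δ : ℝ)
    (hres : ∀ s, V s ≤ (∑ a1, ∑ a2, π1 s a1 * π2 s a2 * Qf R P γ V s a1 a2) + δ) :
    ∀ s, V s ≤ W s + δ / (1 - γ) := by
  have hγ' : (0:ℝ) < 1 - γ := by linarith
  obtain ⟨s0, _, hs0⟩ := Finset.exists_max_image univ (fun s => V s - W s) univ_nonempty
  set M := V s0 - W s0 with hMdef
  have hMle : ∀ s, V s ≤ W s + M := fun s => by have := hs0 s (mem_univ s); simp at this; linarith
  have key : M ≤ δ + γ * M := by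
    have h1 := hW s0
    have h2 : (∑ a1, ∑ a2, π1 s0 a1 * π2 s0 a2 * Qf R P γ V s0 a1 a2)
        ≤ (∑ a1, ∑ a2, π1 s0 a1 * π2 s0 a2 * Qf R P γ W s0 a1 a2) + γ * M :=
      wsum2_sub_le' (π1 s0) (π2 s0) (hπ1.1 s0) (hπ1.2 s0) (hπ2.1 s0) (hπ2.2 s0) _ _ _
        (fun a1 a2 => Qf_sub_le' R P hP hγ0 W V M hMle s0 a1 a2)
    have h3 := hres s0
    have : V s0 ≤ W s0 + δ + γ * M := by rw [h1]; linarith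
    linarith
  have hMfin : M ≤ δ / (1 - γ) := by
    rw [le_div_iff₀ hγ']
    nlinarith
  intro s
  have := hMle s
  linarith

end AuxHelpers
section NashHelpers

open Finset

variable {S A1 A2 : Type*}

lemma nash_one_step_le' [Fintype S] [Nonempty S] [Fintype A1] [Fintype A2]
    (R : S → A1 → A2 → ℝ) (P : S → A1 → A2 → S → ℝ) {γ : ℝ}
    (hP : IsKernel P) (hγ0 : 0 ≤ γ) (hγ1 : γ < 1)
    (Val : (S → A1 → ℝ) → (S → A2 → ℝ) → S → ℝ) (hVal : IsValueOperator R P γ Val)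
    (π1 : S → A1 → ℝ) (π2 : S → A2 → ℝ) (hNash : IsNash Val π1 π2)
    (s : S) (p : A1 → ℝ) (hp0 : ∀ a, 0 ≤ p a) (hp1 : ∑ a, p a = 1) :
    (∑ a1, ∑ a2, p a1 * π2 s a2 * Qf R P γ (Val π1 π2) s a1 a2) ≤ Val π1 π2 s := by
  classical
  obtain ⟨hπ1, hπ2, hN⟩ := hNash
  set V := Val π1 π2 with hVdef
  have hV : IsValue R P γ π1 π2 V := hVal π1 π2 hπ1 hπ2
  set π1' : S → A1 → ℝ := fun s' a => if s' = s then p a else π1 s' a with hπ1'def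
  have hπ1' : IsPolicy π1' := by
    constructor
    · intro s' a
      by_cases h : s' = s <;> simp [hπ1'def, h, hp0 a, hπ1.1 s' a]
    · intro s'
      by_cases h : s' = s <;> simp [hπ1'def, h, hp1, hπ1.2 s']
  set W := Val π1' π2 with hWdef
  have hW : IsValue R P γ π1' π2 W := hVal π1' π2 hπ1' hπ2
  have hWle : ∀ s', W s' ≤ V s' := fun s' => (hN s' π1' π2 hπ1' hπ2).2
  obtain ⟨s0, _, hs0⟩ := Finset.exists_min_image univ (fun s' => W s' - V s') univ_nonempty
  set m := W s0 - V s0 with hmdef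
  have hm : ∀ s', V s' + m ≤ W s' := fun s' => by
    have := hs0 s' (mem_univ s'); linarith
  have hm0 : m ≤ 0 := by have := hWle s0; linarith
  have step : ∀ s1, (∑ a1, ∑ a2, π1' s1 a1 * π2 s1 a2 * Qf R P γ V s1 a1 a2) + γ * m ≤ W s1 := by
    intro s1
    have h1 := hW s1
    have h2 : (∑ a1, ∑ a2, π1' s1 a1 * π2 s1 a2 * Qf R P γ V s1 a1 a2)
        ≤ (∑ a1, ∑ a2, π1' s1 a1 * π2 s1 a2 * Qf R P γ W s1 a1 a2) + γ * (-m) :=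
      wsum2_sub_le' (π1' s1) (π2 s1) (hπ1'.1 s1) (hπ1'.2 s1) (hπ2.1 s1) (hπ2.2 s1) _ _ _
        (fun a1 a2 => Qf_sub_le' R P hP hγ0 W V (-m) (fun s' => by have := hm s'; linarith) s1 a1 a2)
    rw [← h1] at h2
    linarith
  have hsum_eq : ∀ s1, s1 = s →
      (∑ a1, ∑ a2, π1' s1 a1 * π2 s1 a2 * Qf R P γ V s1 a1 a2)
      = ∑ a1, ∑ a2, p a1 * π2 s1 a2 * Qf R P γ V s1 a1 a2 := by
    intro s1 h
    refine Finset.sum_congr rfl fun a1 _ => Finset.sum_congr rfl fun a2 _ => ?_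
    simp [hπ1'def, h]
  by_cases hcase : s0 = s
  · have hstep := step s0
    rw [hsum_eq s0 hcase] at hstep
    have hms : m = W s - V s := by rw [hmdef, hcase]
    subst hcase
    have hWs := hWle s0
    nlinarith
  · have hstep0 := step s0
    have heq : (∑ a1, ∑ a2, π1' s0 a1 * π2 s0 a2 * Qf R P γ V s0 a1 a2)
        = ∑ a1, ∑ a2, π1 s0 a1 * π2 s0 a2 * Qf R P γ V s0 a1 a2 := by
      refine Finset.sum_congr rfl fun a1 _ => Finset.sum_congr rfl fun a2 _ => ?_
      simp [hπ1'def, hcase]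
    rw [heq, ← hV s0] at hstep0
    have hm0' : 0 ≤ m := by nlinarith
    have hstepS := step s
    rw [hsum_eq s rfl] at hstepS
    have hWs := hWle s
    nlinarith
lemma nash_one_step_ge' [Fintype S] [Nonempty S] [Fintype A1] [Fintype A2]
    (R : S → A1 → A2 → ℝ) (P : S → A1 → A2 → S → ℝ) {γ : ℝ}
    (hP : IsKernel P) (hγ0 : 0 ≤ γ) (hγ1 : γ < 1)
    (Val : (S → A1 → ℝ) → (S → A2 → ℝ) → S → ℝ) (hVal : IsValueOperator R P γ Val)
    (π1 : S → A1 → ℝ) (π2 : S → A2 → ℝ) (hNash : IsNash Val π1 π2)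
    (s : S) (q : A2 → ℝ) (hq0 : ∀ a, 0 ≤ q a) (hq1 : ∑ a, q a = 1) :
    Val π1 π2 s ≤ ∑ a1, ∑ a2, π1 s a1 * q a2 * Qf R P γ (Val π1 π2) s a1 a2 := by
  classical
  obtain ⟨hπ1, hπ2, hN⟩ := hNash
  set V := Val π1 π2 with hVdef
  have hV : IsValue R P γ π1 π2 V := hVal π1 π2 hπ1 hπ2
  set π2' : S → A2 → ℝ := fun s' a => if s' = s then q a else π2 s' a with hπ2'def
  have hπ2' : IsPolicy π2' := by
    constructor
    · intro s' a
      by_cases h : s' = s <;> simp [hπ2'def, h, hq0 a, hπ2.1 s' a]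
    · intro s'
      by_cases h : s' = s <;> simp [hπ2'def, h, hq1, hπ2.2 s']
  set W := Val π1 π2' with hWdef
  have hW : IsValue R P γ π1 π2' W := hVal π1 π2' hπ1 hπ2'
  have hWge : ∀ s', V s' ≤ W s' := fun s' => (hN s' π1 π2' hπ1 hπ2').1
  obtain ⟨s0, _, hs0⟩ := Finset.exists_max_image univ (fun s' => W s' - V s') univ_nonempty
  set m := W s0 - V s0 with hmdef
  have hm : ∀ s', W s' ≤ V s' + m := fun s' => by
    have := hs0 s' (mem_univ s'); simp at this; linarith
  have hm0 : 0 ≤ m := by have := hWge s0; linarith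
  have step : ∀ s1, W s1 ≤ (∑ a1, ∑ a2, π1 s1 a1 * π2' s1 a2 * Qf R P γ V s1 a1 a2) + γ * m := by
    intro s1
    have h1 := hW s1
    have h2 : (∑ a1, ∑ a2, π1 s1 a1 * π2' s1 a2 * Qf R P γ W s1 a1 a2)
        ≤ (∑ a1, ∑ a2, π1 s1 a1 * π2' s1 a2 * Qf R P γ V s1 a1 a2) + γ * m :=
      wsum2_sub_le' (π1 s1) (π2' s1) (hπ1.1 s1) (hπ1.2 s1) (hπ2'.1 s1) (hπ2'.2 s1) _ _ _
        (fun a1 a2 => Qf_sub_le' R P hP hγ0 V W m hm s1 a1 a2)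
    rw [← h1] at h2
    linarith
  have hsum_eq : ∀ s1, s1 = s →
      (∑ a1, ∑ a2, π1 s1 a1 * π2' s1 a2 * Qf R P γ V s1 a1 a2)
      = ∑ a1, ∑ a2, π1 s1 a1 * q a2 * Qf R P γ V s1 a1 a2 := by
    intro s1 h
    refine Finset.sum_congr rfl fun a1 _ => Finset.sum_congr rfl fun a2 _ => ?_
    simp [hπ2'def, h]
  by_cases hcase : s0 = s
  · have hstep := step s0
    rw [hsum_eq s0 hcase] at hstep
    subst hcase
    have hWs := hWge s0
    nlinarith
  · have hstep0 := step s0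
    have heq : (∑ a1, ∑ a2, π1 s0 a1 * π2' s0 a2 * Qf R P γ V s0 a1 a2)
        = ∑ a1, ∑ a2, π1 s0 a1 * π2 s0 a2 * Qf R P γ V s0 a1 a2 := by
      refine Finset.sum_congr rfl fun a1 _ => Finset.sum_congr rfl fun a2 _ => ?_
      simp [hπ2'def, hcase]
    rw [heq, ← hV s0] at hstep0
    have hm0' : m ≤ 0 := by nlinarith
    have hstepS := step s
    rw [hsum_eq s rfl] at hstepS
    have hWs := hWge s
    nlinarith
lemma PA_sum_mul' {S SA A1 A2 : Type*} [Fintype S] [Fintype SA] [DecidableEq SA]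
    (P : S → A1 → A2 → S → ℝ) (φ : S → SA) (w : S → ℝ) (VA : SA → ℝ)
    (sA : SA) (a1 : A1) (a2 : A2) :
    ∑ sA', PA P φ w sA a1 a2 sA' * VA sA'
      = ∑ g ∈ univ.filter (fun g => φ g = sA),
          (∑ s', P g a1 a2 s' * VA (φ s')) * w g := by
  unfold PA
  have h1 : ∀ sA' : SA,
      (∑ g ∈ univ.filter (fun g => φ g = sA),
        ∑ s' ∈ univ.filter (fun s' => φ s' = sA'), P g a1 a2 s' * w g) * VA sA'
      = ∑ g ∈ univ.filter (fun g => φ g = sA),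
          ∑ s' ∈ univ.filter (fun s' => φ s' = sA'), P g a1 a2 s' * w g * VA (φ s') := by
    intro sA'
    rw [Finset.sum_mul]
    refine Finset.sum_congr rfl fun g _ => ?_
    rw [Finset.sum_mul]
    exact Finset.sum_congr rfl fun s' hs' => by
      rw [Finset.mem_filter] at hs'; rw [hs'.2]
  simp_rw [h1]
  rw [Finset.sum_comm]
  refine Finset.sum_congr rfl fun g _ => ?_
  rw [Finset.sum_fiberwise univ φ (fun s' => P g a1 a2 s' * w g * VA (φ s'))]
  rw [Finset.sum_mul]
  exact Finset.sum_congr rfl fun s' _ => by ring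

lemma PA_isKernel' {S SA A1 A2 : Type*} [Fintype S] [Fintype SA] [DecidableEq SA]
    (P : S → A1 → A2 → S → ℝ) (hP : IsKernel P) (φ : S → SA) (w : S → ℝ)
    (hw : IsAggWeight φ w) : IsKernel (PA P φ w : SA → A1 → A2 → SA → ℝ) := by
  constructor
  · intro sA a1 a2 sA'
    exact Finset.sum_nonneg fun g _ => Finset.sum_nonneg fun s' _ =>
      mul_nonneg (hP.1 g a1 a2 s') (hw.1 g).1
  · intro sA a1 a2
    have h := PA_sum_mul' P φ w (fun _ => (1:ℝ)) sA a1 a2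
    simp only [mul_one] at h
    rw [h]
    calc ∑ g ∈ univ.filter (fun g => φ g = sA), (∑ s', P g a1 a2 s') * w g
        = ∑ g ∈ univ.filter (fun g => φ g = sA), w g :=
          Finset.sum_congr rfl fun g _ => by rw [hP.2 g a1 a2, one_mul]
      _ = 1 := hw.2 sA

lemma QA_eq' {S SA A1 A2 : Type*} [Fintype S] [Fintype SA] [DecidableEq SA]
    (R : S → A1 → A2 → ℝ) (P : S → A1 → A2 → S → ℝ) (γ : ℝ)
    (φ : S → SA) (w : S → ℝ) (VA : SA → ℝ) (sA : SA) (a1 : A1) (a2 : A2) :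
    Qf (RA R φ w) (PA P φ w) γ VA sA a1 a2
      = ∑ g ∈ univ.filter (fun g => φ g = sA),
          (R g a1 a2 + γ * ∑ s', P g a1 a2 s' * VA (φ s')) * w g := by
  unfold Qf RA
  rw [PA_sum_mul', Finset.mul_sum, ← Finset.sum_add_distrib]
  exact Finset.sum_congr rfl fun g _ => by ring
end NashHelpers
theorem duality_gap_bound_minimax_value_abstraction
    {S SA A1 A2 : Type*}
    [Fintype S] [Nonempty S] [Fintype SA] [DecidableEq SA]
    [Fintype A1] [Nonempty A1] [Fintype A2] [Nonempty A2]
    (P : S → A1 → A2 → S → ℝ) (R : S → A1 → A2 → ℝ) (γ : ℝ)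
    (hP : IsKernel P) (hR : IsReward R) (hγ0 : 0 ≤ γ) (hγ1 : γ < 1)
    (Val : (S → A1 → ℝ) → (S → A2 → ℝ) → S → ℝ)
    (hVal : IsValueOperator R P γ Val)
    (φ : S → SA) (hφ : Function.Surjective φ)
    (w : S → ℝ) (hw : IsAggWeight φ w)
    (ValA : (SA → A1 → ℝ) → (SA → A2 → ℝ) → SA → ℝ)
    (hValA : IsValueOperator (RA R φ w) (PA P φ w) γ ValA)
    (πA1 : SA → A1 → ℝ) (πA2 : SA → A2 → ℝ)
    (hNashA : IsNash ValA πA1 πA2)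
    (π1s : S → A1 → ℝ) (π2s : S → A2 → ℝ)
    (hNash : IsNash Val π1s π2s)
    (ε : ℝ) (hε : 0 ≤ ε)
    (hagg : ∀ s1 s2 : S, φ s1 = φ s2 → ∀ (a1 : A1) (a2 : A2),
      |Qf R P γ (Val π1s π2s) s1 a1 a2 - Qf R P γ (Val π1s π2s) s2 a1 a2| ≤ ε)
    :
    ∀ s : S, ∀ (π1' : S → A1 → ℝ) (π2' : S → A2 → ℝ), IsPolicy π1' → IsPolicy π2' →
      Val π1' (fun s => πA2 (φ s)) s - Val (fun s => πA1 (φ s)) π2' s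
        ≤ 12 * ε / (1 - γ) ^ 3 := by
  intro s πd1 πd2 hπd1 hπd2
  classical
  have hγ' : (0:ℝ) < 1 - γ := by linarith
  have hπA1 := hNashA.1
  have hπA2 := hNashA.2.1
  have hπ1s := hNash.1
  have hπ2s := hNash.2.1
  have hPA : IsKernel (PA P φ w : SA → A1 → A2 → SA → ℝ) := PA_isKernel' P hP φ w hw
  haveI : Nonempty SA := ⟨φ (Classical.arbitrary S)⟩
  set Vs : S → ℝ := Val π1s π2s with hVsdef
  set VA : SA → ℝ := ValA πA1 πA2 with hVAdef
  obtain ⟨s1, _, hs1⟩ := Finset.exists_max_image (univ : Finset S)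
    (fun s' => |VA (φ s') - Vs s'|) univ_nonempty
  set D : ℝ := |VA (φ s1) - Vs s1| with hDdef
  have hD : ∀ s', |VA (φ s') - Vs s'| ≤ D := fun s' => hs1 s' (mem_univ s')
  have hD0 : (0:ℝ) ≤ D := le_trans (abs_nonneg _) (hD s1)
  -- Q-value closeness between abstract and ground games
  have Qclose : ∀ (s' : S) (a1 : A1) (a2 : A2),
      |Qf (RA R φ w) (PA P φ w) γ VA (φ s') a1 a2 - Qf R P γ Vs s' a1 a2| ≤ ε + γ * D := by
    intro s' a1 a2
    rw [QA_eq']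
    have hrw : (∑ g ∈ univ.filter (fun g => φ g = φ s'),
        (R g a1 a2 + γ * ∑ s'', P g a1 a2 s'' * VA (φ s'')) * w g) - Qf R P γ Vs s' a1 a2
        = ∑ g ∈ univ.filter (fun g => φ g = φ s'),
            w g * ((R g a1 a2 + γ * ∑ s'', P g a1 a2 s'' * VA (φ s'')) - Qf R P γ Vs s' a1 a2) := by
      simp only [mul_sub]
      rw [Finset.sum_sub_distrib, ← Finset.sum_mul, hw.2 (φ s'), one_mul]
      congr 1
      exact Finset.sum_congr rfl fun g _ => mul_comm _ _
    rw [sub_eq_iff_eq_add] at hrw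
    rw [hrw, add_sub_cancel_right]
    apply wsum_abs_le' _ w _ _ (fun g _ => (hw.1 g).1) (hw.2 (φ s'))
    intro g hg
    rw [Finset.mem_filter] at hg
    have h2 := hagg g s' hg.2 a1 a2
    have h1 : |(∑ s'', P g a1 a2 s'' * VA (φ s'')) - ∑ s'', P g a1 a2 s'' * Vs s''| ≤ D := by
      have e : (∑ s'', P g a1 a2 s'' * VA (φ s'')) - ∑ s'', P g a1 a2 s'' * Vs s''
          = ∑ s'', P g a1 a2 s'' * (VA (φ s'') - Vs s'') := by
        rw [← Finset.sum_sub_distrib]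
        exact Finset.sum_congr rfl fun s'' _ => by ring
      rw [e]
      exact wsum_abs_le' univ (P g a1 a2) _ D (fun x _ => hP.1 g a1 a2 x) (hP.2 g a1 a2)
        (fun x _ => hD x)
    have hexp : (R g a1 a2 + γ * ∑ s'', P g a1 a2 s'' * VA (φ s'')) - Qf R P γ Vs s' a1 a2
        = (Qf R P γ Vs g a1 a2 - Qf R P γ Vs s' a1 a2)
          + γ * ((∑ s'', P g a1 a2 s'' * VA (φ s'')) - ∑ s'', P g a1 a2 s'' * Vs s'') := by
      unfold Qf; ring
    rw [hexp]
    calc |(Qf R P γ Vs g a1 a2 - Qf R P γ Vs s' a1 a2)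
          + γ * ((∑ s'', P g a1 a2 s'' * VA (φ s'')) - ∑ s'', P g a1 a2 s'' * Vs s'')|
        ≤ |Qf R P γ Vs g a1 a2 - Qf R P γ Vs s' a1 a2|
          + |γ * ((∑ s'', P g a1 a2 s'' * VA (φ s'')) - ∑ s'', P g a1 a2 s'' * Vs s'')| :=
          abs_add_le _ _
      _ ≤ ε + γ * D := by
          refine add_le_add h2 ?_
          rw [abs_mul, abs_of_nonneg hγ0]
          exact mul_le_mul_of_nonneg_left h1 hγ0
  -- closeness of values
  have Dclose : ∀ s' : S, |VA (φ s') - Vs s'| ≤ ε + γ * D := by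
    intro s'
    rw [abs_le]
    constructor
    · have g2 : Vs s' ≤ ∑ a1, ∑ a2, π1s s' a1 * πA2 (φ s') a2 * Qf R P γ Vs s' a1 a2 :=
        nash_one_step_ge' R P hP hγ0 hγ1 Val hVal π1s π2s hNash s' (πA2 (φ s'))
          (hπA2.1 _) (hπA2.2 _)
      have gmid : (∑ a1, ∑ a2, π1s s' a1 * πA2 (φ s') a2 * Qf R P γ Vs s' a1 a2)
          ≤ (∑ a1, ∑ a2, π1s s' a1 * πA2 (φ s') a2
              * Qf (RA R φ w) (PA P φ w) γ VA (φ s') a1 a2) + (ε + γ * D) :=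
        wsum2_sub_le' (π1s s') (πA2 (φ s')) (hπ1s.1 s') (hπ1s.2 s') (hπA2.1 _) (hπA2.2 _) _ _ _
          (fun a1 a2 => by have := Qclose s' a1 a2; rw [abs_le] at this; linarith [this.1])
      have gtop : (∑ a1, ∑ a2, π1s s' a1 * πA2 (φ s') a2
          * Qf (RA R φ w) (PA P φ w) γ VA (φ s') a1 a2) ≤ VA (φ s') :=
        nash_one_step_le' (RA R φ w) (PA P φ w) hPA hγ0 hγ1 ValA hValA πA1 πA2 hNashA (φ s')
          (π1s s') (hπ1s.1 s') (hπ1s.2 s')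
      linarith
    · have g2 : VA (φ s') ≤ ∑ a1, ∑ a2, πA1 (φ s') a1 * π2s s' a2
          * Qf (RA R φ w) (PA P φ w) γ VA (φ s') a1 a2 :=
        nash_one_step_ge' (RA R φ w) (PA P φ w) hPA hγ0 hγ1 ValA hValA πA1 πA2 hNashA (φ s')
          (π2s s') (hπ2s.1 s') (hπ2s.2 s')
      have gmid : (∑ a1, ∑ a2, πA1 (φ s') a1 * π2s s' a2
          * Qf (RA R φ w) (PA P φ w) γ VA (φ s') a1 a2)
          ≤ (∑ a1, ∑ a2, πA1 (φ s') a1 * π2s s' a2 * Qf R P γ Vs s' a1 a2) + (ε + γ * D) :=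
        wsum2_sub_le' (πA1 (φ s')) (π2s s') (hπA1.1 _) (hπA1.2 _) (hπ2s.1 s') (hπ2s.2 s') _ _ _
          (fun a1 a2 => by have := Qclose s' a1 a2; rw [abs_le] at this; linarith [this.2])
      have gtop : (∑ a1, ∑ a2, πA1 (φ s') a1 * π2s s' a2 * Qf R P γ Vs s' a1 a2) ≤ Vs s' :=
        nash_one_step_le' R P hP hγ0 hγ1 Val hVal π1s π2s hNash s' (πA1 (φ s'))
          (hπA1.1 _) (hπA1.2 _)
      linarith
  have hDle : D ≤ ε + γ * D := Dclose s1
  have hDeps : D * (1 - γ) ≤ ε := by nlinarith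
  -- the two lifted policies
  have hπG2 : IsPolicy (fun s' : S => πA2 (φ s')) := ⟨fun s' a => hπA2.1 _ a, fun s' => hπA2.2 _⟩
  have hπG1 : IsPolicy (fun s' : S => πA1 (φ s')) := ⟨fun s' a => hπA1.1 _ a, fun s' => hπA1.2 _⟩
  have hres1 : ∀ s1' : S, (∑ a1, ∑ a2, πd1 s1' a1 * πA2 (φ s1') a2 * Qf R P γ Vs s1' a1 a2)
      ≤ Vs s1' + 2 * (ε + γ * D) := by
    intro s1'
    have step1 : (∑ a1, ∑ a2, πd1 s1' a1 * πA2 (φ s1') a2 * Qf R P γ Vs s1' a1 a2)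
        ≤ (∑ a1, ∑ a2, πd1 s1' a1 * πA2 (φ s1') a2
            * Qf (RA R φ w) (PA P φ w) γ VA (φ s1') a1 a2) + (ε + γ * D) :=
      wsum2_sub_le' (πd1 s1') (πA2 (φ s1')) (hπd1.1 s1') (hπd1.2 s1') (hπA2.1 _) (hπA2.2 _) _ _ _
        (fun a1 a2 => by have := Qclose s1' a1 a2; rw [abs_le] at this; linarith [this.1])
    have step2 : (∑ a1, ∑ a2, πd1 s1' a1 * πA2 (φ s1') a2
        * Qf (RA R φ w) (PA P φ w) γ VA (φ s1') a1 a2) ≤ VA (φ s1') :=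
      nash_one_step_le' (RA R φ w) (PA P φ w) hPA hγ0 hγ1 ValA hValA πA1 πA2 hNashA (φ s1')
        (πd1 s1') (hπd1.1 s1') (hπd1.2 s1')
    have step3 := Dclose s1'
    rw [abs_le] at step3
    linarith [step3.2]
  have hres2 : ∀ s1' : S, Vs s1'
      ≤ (∑ a1, ∑ a2, πA1 (φ s1') a1 * πd2 s1' a2 * Qf R P γ Vs s1' a1 a2) + 2 * (ε + γ * D) := by
    intro s1'
    have step1 : (∑ a1, ∑ a2, πA1 (φ s1') a1 * πd2 s1' a2
        * Qf (RA R φ w) (PA P φ w) γ VA (φ s1') a1 a2)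
        ≤ (∑ a1, ∑ a2, πA1 (φ s1') a1 * πd2 s1' a2 * Qf R P γ Vs s1' a1 a2) + (ε + γ * D) :=
      wsum2_sub_le' (πA1 (φ s1')) (πd2 s1') (hπA1.1 _) (hπA1.2 _) (hπd2.1 s1') (hπd2.2 s1') _ _ _
        (fun a1 a2 => by have := Qclose s1' a1 a2; rw [abs_le] at this; linarith [this.2])
    have step2 : VA (φ s1') ≤ ∑ a1, ∑ a2, πA1 (φ s1') a1 * πd2 s1' a2
        * Qf (RA R φ w) (PA P φ w) γ VA (φ s1') a1 a2 :=
      nash_one_step_ge' (RA R φ w) (PA P φ w) hPA hγ0 hγ1 ValA hValA πA1 πA2 hNashA (φ s1')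
        (πd2 s1') (hπd2.1 s1') (hπd2.2 s1')
    have step3 := Dclose s1'
    rw [abs_le] at step3
    linarith [step3.1]
  have W1le : ∀ s', Val πd1 (fun s'' => πA2 (φ s'')) s' ≤ Vs s' + (2 * (ε + γ * D)) / (1 - γ) :=
    fixedpoint_le' R P hP hγ0 hγ1 πd1 (fun s'' => πA2 (φ s'')) hπd1 hπG2
      (Val πd1 (fun s'' => πA2 (φ s''))) Vs (hVal _ _ hπd1 hπG2) _ hres1
  have W2ge : ∀ s', Vs s' ≤ Val (fun s'' => πA1 (φ s'')) πd2 s' + (2 * (ε + γ * D)) / (1 - γ) :=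
    fixedpoint_ge' R P hP hγ0 hγ1 (fun s'' => πA1 (φ s'')) πd2 hπG1 hπd2
      (Val (fun s'' => πA1 (φ s'')) πd2) Vs (hVal _ _ hπG1 hπd2) _ hres2
  have h1 := W1le s
  have h2 := W2ge s
  have hfin : 2 * (2 * (ε + γ * D)) / (1 - γ) ≤ 12 * ε / (1 - γ) ^ 3 := by
    rw [div_le_div_iff₀ hγ' (by positivity)]
    nlinarith [mul_le_mul_of_nonneg_left hDeps (mul_nonneg hγ0 (mul_nonneg hγ'.le hγ'.le)),
      mul_nonneg hε hγ'.le, mul_nonneg (mul_nonneg hε hγ'.le) hγ'.le,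
      mul_nonneg (mul_nonneg hγ0 hD0) hγ'.le, sq_nonneg (1 - γ), hD0, hε]
  have hsplit : 2 * (2 * (ε + γ * D)) / (1 - γ)
      = (2 * (ε + γ * D)) / (1 - γ) + (2 * (ε + γ * D)) / (1 - γ) := by ring
  linarith [hsplit ▸ hfin]
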